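/- Suppose λ is strongly inaccessible, ⟨(T_ξ, f_ξ) : ξ < μ⟩ is the increasing continuous sequence of Q*-conditions constructed in the proof of Theorem 1.8 with T_μ = ⋃_{ξ<μ} T_ξ and μ-diamond sequence ⟨ν_δ : δ ∈ S₀ ∩ μ⟩, where at successor steps ξ = ζ+1 the level α(T_ζ) of T_ξ omits ν_{α(T_ζ)} whenever α(T_ζ) ∈ S₀ and ν_{α(T_ζ)} ∉ range(f_ζ). Then for every ρ ∈ lim_μ(T_μ) (a cofinal branch through T_μ) the set {δ ∈ S₀ ∩ μ : α(T_δ) = δ and ν_δ = ρ↾δ and ρ↾δ ∈ range(f_δ)} is stationary in μ. -/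

import Mathlib

open Ordinal Set Cardinal

/-- A transfinite binary sequence: a length and values, zero beyond the length. -/
structure BSeq where
  len : Ordinal.{0}
  val : Ordinal.{0} → Bool
  val_eq_false : ∀ β, len ≤ β → val β = false

namespace BSeq

/-- The empty sequence. -/
def nil : BSeq := ⟨0, fun _ => false, fun _ _ => rfl⟩

/-- Restriction `η↾β` of a sequence to length `β`. -/
noncomputable def restrict (η : BSeq) (β : Ordinal) : BSeq :=
  ⟨min η.len β, fun γ => if γ < β then η.val γ else false, by
    intro γ hγ
    rcases min_le_iff.mp hγ with h | h
    · by_cases hb : γ < β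
      · simpa [hb] using η.val_eq_false γ h
      · simp [hb]
    · simp [not_lt.mpr h]⟩

/-- `ν ⊴ η` : `ν` is an initial segment of `η`. -/
def IsInitSeg (ν η : BSeq) : Prop :=
  ν.len ≤ η.len ∧ ∀ β < ν.len, ν.val β = η.val β

/-- `ν ◁ η` : `ν` is a proper initial segment of `η`. -/
def IsStrictInitSeg (ν η : BSeq) : Prop :=
  ν.IsInitSeg η ∧ ν.len < η.len

/-- `η⌢⟨b⟩`, appending one bit. -/
noncomputable def snoc (η : BSeq) (b : Bool) : BSeq :=
  ⟨η.len + 1, fun β => if β = η.len then b else η.val β, by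
    intro β hβ
    have h1 : η.len < β := by
      exact lt_of_lt_of_le (lt_add_one η.len) hβ
    show (if β = η.len then b else η.val β) = false
    rw [if_neg (ne_of_gt h1)]
    exact η.val_eq_false β h1.le⟩

end BSeq

/-- The level `T_{[β]} = T ∩ 2^β`. -/
def level (T : Set BSeq) (β : Ordinal) : Set BSeq := {η ∈ T | η.len = β}

/-- `T_{[<β]} = T ∩ 2^{<β}`. -/
def levelLT (T : Set BSeq) (β : Ordinal) : Set BSeq := {η ∈ T | η.len < β}

/-- `lim_δ(T) = {η ∈ 2^δ : ∀ β < δ, η↾β ∈ T}`. -/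
def limAt (T : Set BSeq) (δ : Ordinal) : Set BSeq :=
  {η | η.len = δ ∧ ∀ β < δ, η.restrict β ∈ T}

/-- `T ⊆ 2^{<α}` is an `α`-tree. -/
structure IsTree (α : Ordinal) (T : Set BSeq) : Prop where
  limit : Order.IsSuccLimit α
  len_lt : ∀ η ∈ T, η.len < α
  nil_mem : BSeq.nil ∈ T
  downClosed : ∀ ν η : BSeq, ν.IsStrictInitSeg η → η ∈ T → ν ∈ T
  succ_mem : ∀ η ∈ T, ∀ b : Bool, η.snoc b ∈ T
  ext_mem : ∀ η ∈ T, ∀ β, η.len ≤ β → β < α → ∃ ρ ∈ T, η.IsInitSeg ρ ∧ ρ.len = β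

/-- `T` has true height `α`: every node lies on a cofinal branch through `T`. -/
def TrueHeight (α : Ordinal) (T : Set BSeq) : Prop :=
  ∀ η ∈ T, ∃ ν : BSeq, ν.len = α ∧ η.IsStrictInitSeg ν ∧ ∀ β < α, ν.restrict β ∈ T

/-- A condition of the forcing `Q`: a tree of true height `α` (a limit ordinal)
omitting at most one limit point at each limit level. -/
structure IsCond (α : Ordinal) (T : Set BSeq) : Prop where
  tree : IsTree α T
  trueHeight : TrueHeight α T
  omits_le_one : ∀ δ < α, Order.IsSuccLimit δ → (limAt T δ \ level T δ).Subsingleton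

/-- The end-extension order of `Q`. -/
def QLe (α₁ : Ordinal) (T₁ : Set BSeq) (α₂ : Ordinal) (T₂ : Set BSeq) : Prop :=
  α₁ ≤ α₂ ∧ T₁ = levelLT T₂ α₁

/-- `f` is a witness for `T` (of height `α`). -/
def IsWitness (α : Ordinal) (T : Set BSeq) (f : BSeq → BSeq) : Prop :=
  ∀ η ∈ T, f η ∈ limAt T α ∧ η.IsStrictInitSeg (f η)

/-- The order of `Q^*`. -/
def QsLe (α₁ : Ordinal) (T₁ : Set BSeq) (f₁ : BSeq → BSeq)
    (α₂ : Ordinal) (T₂ : Set BSeq) (f₂ : BSeq → BSeq) : Prop :=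
  QLe α₁ T₁ α₂ T₂ ∧ ∀ η ∈ T₁, (f₁ η).IsInitSeg (f₂ η)

/-- `C` is a club (closed unbounded) subset of `μ`. -/
def IsClubIn (C : Set Ordinal) (μ : Ordinal) : Prop :=
  C ⊆ Set.Iio μ ∧
  (∀ δ < μ, Order.IsSuccLimit δ → (∀ β < δ, ∃ γ ∈ C, β < γ ∧ γ < δ) → δ ∈ C) ∧
  (∀ β < μ, ∃ γ ∈ C, β < γ ∧ γ < μ)

/-- `S` is stationary in `μ`. -/
def IsStationaryIn (S : Set Ordinal) (μ : Ordinal) : Prop :=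
  ∀ C, IsClubIn C μ → (S ∩ C).Nonempty

/-- The set of accumulation points of a set of ordinals. -/
def accPts (C : Set Ordinal) : Set Ordinal :=
  {β | 0 < β ∧ ∀ γ < β, ∃ δ ∈ C, γ < δ ∧ δ < β}

theorem stmt19 (μ : Cardinal) (hμ : μ.IsInaccessible)
    (S₀ : Set Ordinal) (ν : Ordinal → BSeq)
    (hS₀ : ∀ δ ∈ S₀, δ < μ.ord ∧ Order.IsSuccLimit δ) (hν : ∀ δ ∈ S₀, (ν δ).len = δ)
    (hdiam : ∀ ρ : BSeq, ρ.len = μ.ord →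
      IsStationaryIn {δ ∈ S₀ | ρ.restrict δ = ν δ} μ.ord)
    (T : Ordinal → Set BSeq) (a : Ordinal → Ordinal) (f : Ordinal → BSeq → BSeq)
    (hcond : ∀ ξ < μ.ord, IsCond (a ξ) (T ξ) ∧ IsWitness (a ξ) (T ξ) (f ξ) ∧ a ξ < μ.ord)
    (hmono : ∀ ζ ξ, ζ < ξ → ξ < μ.ord →
      QsLe (a ζ) (T ζ) (f ζ) (a ξ) (T ξ) (f ξ) ∧ a ζ < a ξ)
    (hconta : ∀ ξ, Order.IsSuccLimit ξ → ξ < μ.ord → a ξ = sSup (a '' Set.Iio ξ))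
    (homit : ∀ δ, δ < μ.ord → δ ∈ S₀ → a δ = δ →
      (∀ η ∈ T δ, f δ η ≠ ν δ) → ν δ ∉ T (δ + 1))
    (ρ : BSeq) (hρ : ρ.len = μ.ord)
    (hρT : ∀ β < μ.ord, ρ.restrict β ∈ ⋃ ξ ∈ Set.Iio μ.ord, T ξ) :
    IsStationaryIn {δ | δ ∈ S₀ ∧ a δ = δ ∧ ν δ = ρ.restrict δ ∧
      ∃ η ∈ T δ, f δ η = ρ.restrict δ} μ.ord := by
  have hord_lim : Order.IsSuccLimit μ.ord := Cardinal.isSuccLimit_ord hμ.1.le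
  -- a is ≥ id below μ.ord
  have ale : ∀ ξ, ξ < μ.ord → ξ ≤ a ξ := by
    intro ξ
    induction ξ using Ordinal.induction with
    | h ξ ih =>
      intro hξ
      by_contra h
      push_neg at h
      have h1 : a ξ ≤ a (a ξ) := ih (a ξ) h (h.trans hξ)
      have h2 : a (a ξ) < a ξ := (hmono (a ξ) ξ h hξ).2
      exact absurd (h1.trans_lt h2) (lt_irrefl _)
  intro C hC
  set E : Set Ordinal := {x | x < μ.ord ∧ a x = x} with hE
  -- C ∩ E is a club
  have hclub : IsClubIn (C ∩ E) μ.ord := by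
    refine ⟨fun x hx => hC.1 hx.1, ?_, ?_⟩
    · -- closedness
      intro δ hδ hδl hacc
      have hδC : δ ∈ C := hC.2.1 δ hδ hδl (fun β hβ => by
        obtain ⟨γ, hγ, h1, h2⟩ := hacc β hβ
        exact ⟨γ, hγ.1, h1, h2⟩)
      refine ⟨hδC, hδ, ?_⟩
      have hss : a δ = sSup (a '' Set.Iio δ) := hconta δ hδl hδ
      have hle : a δ ≤ δ := by
        rw [hss]
        refine csSup_le ⟨a 0, 0, hδl.pos, rfl⟩ ?_
        rintro x ⟨γ, hγ, rfl⟩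
        obtain ⟨e, he, h1, h2⟩ := hacc γ hγ
        have := (hmono γ e h1 (hC.1 he.1)).2
        rw [he.2.2] at this
        exact (this.trans h2).le
      exact le_antisymm hle (ale δ hδ)
    · -- unboundedness
      intro β hβ
      have step : ∀ x : Ordinal, x < μ.ord → ∃ γ, γ ∈ C ∧ x ⊔ a x < γ ∧ γ < μ.ord := by
        intro x hx
        obtain ⟨γ, hγ, h1, h2⟩ := hC.2.2 (x ⊔ a x) (max_lt hx (hcond x hx).2.2)
        exact ⟨γ, hγ, h1, h2⟩
      let F : {x : Ordinal // x < μ.ord} → {x : Ordinal // x < μ.ord} :=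
        fun x => ⟨(step x.1 x.2).choose, (step x.1 x.2).choose_spec.2.2⟩
      have hFC : ∀ x, (F x).1 ∈ C := fun x => (step x.1 x.2).choose_spec.1
      have hFlt : ∀ x : {x : Ordinal // x < μ.ord}, x.1 < (F x).1 :=
        fun x => (le_max_left _ _).trans_lt (step x.1 x.2).choose_spec.2.1
      have hFa : ∀ x : {x : Ordinal // x < μ.ord}, a x.1 < (F x).1 :=
        fun x => (le_max_right _ _).trans_lt (step x.1 x.2).choose_spec.2.1
      let g : ℕ → {x : Ordinal // x < μ.ord} := fun n => F^[n] ⟨β, hβ⟩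
      have hgsucc : ∀ n, g (n+1) = F (g n) := fun n => Function.iterate_succ_apply' F n _
      have hglt : ∀ n, (g n).1 < (g (n+1)).1 := fun n => by rw [hgsucc]; exact hFlt _
      set δ := ⨆ n, (g n).1 with hδdef
      have hgle : ∀ n, (g n).1 ≤ δ := fun n => Ordinal.le_iSup _ n
      have hδμ : δ < μ.ord := by
        apply Ordinal.iSup_lt_of_lt_cof _ (fun n => (g n).2)
        rw [Cardinal.mk_nat]
        exact hμ.1.trans_le hμ.le_cof_ord
      have hgltδ : ∀ n, (g n).1 < δ := fun n => (hglt n).trans_le (hgle (n+1))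
      have hlt_iff : ∀ x, x < δ → ∃ n, x < (g n).1 := fun x hx => Ordinal.lt_iSup_iff.mp hx
      have hδlim : Order.IsSuccLimit δ := by
        rw [Ordinal.isSuccLimit_iff, Order.isSuccPrelimit_iff_succ_lt]
        refine ⟨?_, ?_⟩
        · intro h0
          exact absurd (hgltδ 0) (by rw [h0]; exact not_lt_of_ge zero_le)
        · intro γ hγ
          obtain ⟨n, hn⟩ := hlt_iff γ hγ
          exact (Order.succ_le_of_lt hn).trans_lt (hgltδ n)
      have hacc : ∀ γ < δ, ∃ e ∈ C, γ < e ∧ e < δ := by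
        intro γ hγ
        obtain ⟨n, hn⟩ := hlt_iff γ hγ
        refine ⟨(g (n+1)).1, by rw [hgsucc]; exact hFC _, hn.trans (hglt n), hgltδ (n+1)⟩
      have hδC : δ ∈ C := hC.2.1 δ hδμ hδlim hacc
      have haδ : a δ = δ := by
        have hss : a δ = sSup (a '' Set.Iio δ) := hconta δ hδlim hδμ
        have hle : a δ ≤ δ := by
          rw [hss]
          refine csSup_le ⟨a 0, 0, hδlim.pos, rfl⟩ ?_
          rintro x ⟨γ, hγ, rfl⟩
          obtain ⟨n, hn⟩ := hlt_iff γ hγ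
          have h1 : a γ < a (g n).1 := (hmono γ (g n).1 hn (g n).2).2
          have h2 : a (g n).1 < (g (n+1)).1 := by rw [hgsucc]; exact hFa _
          exact (h1.trans (h2.trans_le (hgle (n+1)))).le
        exact le_antisymm hle (ale δ hδμ)
      exact ⟨δ, ⟨hδC, hδμ, haδ⟩, (hglt 0).trans_le (hgle 1), hδμ⟩
  -- apply the diamond
  obtain ⟨δ, ⟨hδS₀, hνρ⟩, hδC, hδμ, haδ⟩ := hdiam ρ hρ (C ∩ E) hclub
  refine ⟨δ, ⟨hδS₀, haδ, hνρ.symm, ?_⟩, hδC⟩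
  by_contra h
  push_neg at h
  have hne : ∀ η ∈ T δ, f δ η ≠ ν δ := by
    intro η hη
    rw [← hνρ]
    exact h η hη
  have hnot : ν δ ∉ T (δ + 1) := homit δ hδμ hδS₀ haδ hne
  have hδ1μ : δ + 1 < μ.ord := by rw [Ordinal.add_one_eq_succ]; exact hord_lim.succ_lt hδμ
  -- but ρ.restrict δ ∈ T (δ+1)
  have hlen : (ρ.restrict δ).len = δ := by
    show min ρ.len δ = δ
    rw [hρ]
    exact min_eq_right hδμ.le
  obtain ⟨ξ, hξμ, hmem⟩ : ∃ ξ < μ.ord, ρ.restrict δ ∈ T ξ := by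
    have := hρT δ hδμ
    simpa using this
  have hmem' : ρ.restrict δ ∈ T (δ + 1) := by
    rcases lt_trichotomy ξ (δ + 1) with hlt | heq | hgt
    · have hT : T ξ = levelLT (T (δ+1)) (a ξ) := (hmono ξ (δ+1) hlt hδ1μ).1.1.2
      rw [hT] at hmem
      exact hmem.1
    · rwa [heq] at hmem
    · have hT : T (δ+1) = levelLT (T ξ) (a (δ+1)) := (hmono (δ+1) ξ hgt hξμ).1.1.2
      rw [hT]
      refine ⟨hmem, ?_⟩
      rw [hlen]
      have := (hmono δ (δ+1) (lt_add_one δ) hδ1μ).2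
      rwa [haδ] at this
  rw [hνρ] at hmem'
  exact hnot hmem'
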